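/- Let n, k, m, m₁, m₂ be positive real numbers with k < n and m₁ + m₂ ≤ m. Then k·log₂(m₁/k) + 2k + (n−k)·log₂(m₂/(n−k)) + 2(n−k) ≤ n·log₂(m/n) + 2n. In particular, splitting the Elias-Fano encoding of a set of n integers from a universe of size m into a first segment of k integers re-mapped into a universe of size m₁ and a second segment of n−k integers re-mapped into a universe of size m₂, with m₁ + m₂ ≤ m, does not increase the (real-valued) space bound n·log₂(m/n) + 2n. -/

import Mathlib

/-- Splitting the Elias-Fano encoding into two re-mapped segments does not
increase the real-valued space bound `n·log₂(m/n) + 2n`. -/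
theorem eliasFano_split_two (n k m m₁ m₂ : ℝ) (hn : 0 < n) (hk : 0 < k)
    (hm : 0 < m) (hm₁ : 0 < m₁) (hm₂ : 0 < m₂) (hkn : k < n)
    (hsum : m₁ + m₂ ≤ m) :
    k * Real.logb 2 (m₁ / k) + 2 * k +
        (n - k) * Real.logb 2 (m₂ / (n - k)) + 2 * (n - k) ≤
      n * Real.logb 2 (m / n) + 2 * n := by
  have hnk : 0 < n - k := by linarith
  have ha : m₁ / k ∈ Set.Ioi (0 : ℝ) := Set.mem_Ioi.2 (div_pos hm₁ hk)
  have hb : m₂ / (n - k) ∈ Set.Ioi (0 : ℝ) := Set.mem_Ioi.2 (div_pos hm₂ hnk)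
  have ht : (0 : ℝ) ≤ k / n := le_of_lt (div_pos hk hn)
  have hs : (0 : ℝ) ≤ (n - k) / n := le_of_lt (div_pos hnk hn)
  have hts : k / n + (n - k) / n = 1 := by field_simp; ring
  have hconc := strictConcaveOn_log_Ioi.concaveOn.2 ha hb ht hs hts
  simp only [smul_eq_mul] at hconc
  have heq : k / n * (m₁ / k) + (n - k) / n * (m₂ / (n - k)) = (m₁ + m₂) / n := by
    field_simp
  rw [heq] at hconc
  have hmono : Real.log ((m₁ + m₂) / n) ≤ Real.log (m / n) :=
    Real.log_le_log (div_pos (by linarith) hn) (by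
      apply div_le_div_of_nonneg_right hsum hn.le |>.trans_eq rfl)
  have hkey : k / n * Real.log (m₁ / k) + (n - k) / n * Real.log (m₂ / (n - k)) ≤
      Real.log (m / n) := hconc.trans hmono
  have hlog2 : (0 : ℝ) < Real.log 2 := Real.log_pos (by norm_num)
  have hmul : k * Real.log (m₁ / k) + (n - k) * Real.log (m₂ / (n - k)) ≤
      n * Real.log (m / n) := by
    have := mul_le_mul_of_nonneg_left hkey (le_of_lt hn)
    calc k * Real.log (m₁ / k) + (n - k) * Real.log (m₂ / (n - k))
        = n * (k / n * Real.log (m₁ / k) + (n - k) / n * Real.log (m₂ / (n - k))) := by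
          field_simp
      _ ≤ n * Real.log (m / n) := this
  unfold Real.logb
  have hdiv := div_le_div_of_nonneg_right hmul hlog2.le
  have e1 : k * (Real.log (m₁ / k) / Real.log 2) = k * Real.log (m₁ / k) / Real.log 2 := by
    ring
  have e2 : (n - k) * (Real.log (m₂ / (n - k)) / Real.log 2)
      = (n - k) * Real.log (m₂ / (n - k)) / Real.log 2 := by ring
  have e3 : n * (Real.log (m / n) / Real.log 2) = n * Real.log (m / n) / Real.log 2 := by ring
  rw [add_div] at hdiv
  linarith [hdiv]
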